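/- Let n ≥ 2 and let (φ_{ij}) ∈ SL(n,ℝ) and α_1,…,α_n be positive reals with α_1⋯α_n = 1. Then there exist integers x_1,…,x_n, not all zero, such that |φ_{11}x_1+⋯+φ_{1n}x_n| ≤ α_1 and |φ_{i1}x_1+⋯+φ_{in}x_n| < α_i for 2 ≤ i ≤ n. -/

import Mathlib

open Matrix Finset
open scoped ENNReal

open MeasureTheory in
/-- Strict version of Minkowski's linear forms theorem, for bounds with product `> 1`. -/
lemma minkowski_linear_forms_strict (n : ℕ)
    (φ : Matrix (Fin n) (Fin n) ℝ) (hφ : φ.det = 1)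
    (β : Fin n → ℝ) (hβ : ∀ i, 0 < β i) (hprod : 1 < ∏ i, β i) :
    ∃ x : Fin n → ℤ, x ≠ 0 ∧ ∀ i : Fin n, |∑ j, φ i j * (x j : ℝ)| < β i := by
  have hdet : IsUnit φ.det := hφ ▸ isUnit_one
  have hinv : Invertible φ := φ.invertibleOfIsUnitDet hdet
  let b : Module.Basis (Fin n) ℝ (Fin n → ℝ) := (Pi.basisFun ℝ (Fin n)).map (φ.toLinearEquiv' hinv)
  have hb : ∀ j i, b j i = φ i j := by
    intro j i
    simp [b, Matrix.toLinearEquiv', Matrix.toLin'_apply, Matrix.mulVec_single]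
  have fund := ZSpan.isAddFundamentalDomain' b volume
  have hvol : volume (ZSpan.fundamentalDomain b) = 1 := by
    rw [ZSpan.volume_fundamentalDomain]
    have hmat : Matrix.of ⇑b = φᵀ := by
      ext i j; simp [hb, Matrix.transpose_apply]
    rw [hmat, Matrix.det_transpose, hφ]
    simp
  set s : Set (Fin n → ℝ) := Set.univ.pi fun i => Set.Ioo (-(β i)) (β i) with hs
  have h_symm : ∀ x ∈ s, -x ∈ s := by
    intro x hx
    rw [hs, Set.mem_pi] at hx ⊢
    intro i _
    have := hx i (Set.mem_univ i)
    simp only [Set.mem_Ioo, Pi.neg_apply] at this ⊢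
    constructor <;> linarith [this.1, this.2]
  have h_conv : Convex ℝ s := convex_pi fun i _ => convex_Ioo _ _
  have hμs : volume s = ENNReal.ofReal (∏ i, (2 * β i)) := by
    rw [hs, volume_pi_pi]
    rw [ENNReal.ofReal_prod_of_nonneg (fun i _ => by have := hβ i; positivity)]
    refine Finset.prod_congr rfl fun i _ => ?_
    rw [Real.volume_Ioo]
    ring_nf
  have hlt : volume (ZSpan.fundamentalDomain b) * 2 ^ Module.finrank ℝ (Fin n → ℝ)
      < volume s := by
    rw [hvol, one_mul, hμs, Module.finrank_fintype_fun_eq_card, Fintype.card_fin]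
    have h2n : (2 : ℝ≥0∞) ^ n = ENNReal.ofReal ((2 : ℝ) ^ n) := by
      rw [ENNReal.ofReal_pow (by norm_num)]
      norm_num
    rw [h2n, ENNReal.ofReal_lt_ofReal_iff (Finset.prod_pos fun i _ => by have := hβ i; positivity)]
    calc (2:ℝ) ^ n = 2 ^ n * 1 := by ring
    _ < 2 ^ n * ∏ i, β i := by
        exact mul_lt_mul_of_pos_left hprod (by positivity)
    _ = ∏ i, (2 * β i) := by
        rw [Finset.prod_mul_distrib, Finset.prod_const, Finset.card_univ, Fintype.card_fin]
  haveI : Countable ↥(Submodule.span ℤ (Set.range ⇑b)).toAddSubgroup :=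
    (inferInstance : Countable ↥(Submodule.span ℤ (Set.range ⇑b)))
  obtain ⟨x, hx0, hxs⟩ :=
    exists_ne_zero_mem_lattice_of_measure_mul_two_pow_lt_measure fund h_symm h_conv hlt
  have hmem : (x : Fin n → ℝ) ∈ Submodule.span ℤ (Set.range b) := x.2
  have hrep := (b.mem_span_iff_repr_mem ℤ _).mp hmem
  choose c hc using hrep
  have hxsum : (x : Fin n → ℝ) = ∑ j, (c j : ℝ) • b j := by
    conv_lhs => rw [← b.sum_repr (x : Fin n → ℝ)]
    refine Finset.sum_congr rfl fun j _ => ?_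
    rw [← hc j]
    simp
  refine ⟨c, ?_, ?_⟩
  · intro hc0
    apply hx0
    have : (x : Fin n → ℝ) = 0 := by
      rw [hxsum, hc0]; simp
    exact Subtype.ext this
  · intro i
    rw [hs, Set.mem_pi] at hxs
    have hxi := hxs i (Set.mem_univ i)
    simp only [Set.mem_Ioo] at hxi
    have hxival : (x : Fin n → ℝ) i = ∑ j, φ i j * (c j : ℝ) := by
      rw [hxsum]
      rw [Finset.sum_apply]
      refine Finset.sum_congr rfl fun j _ => ?_
      simp [hb j i, mul_comm]
    rw [← hxival]
    rw [abs_lt]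
    exact ⟨hxi.1, hxi.2⟩

/-- **Minkowski's theorem on linear forms.** If `φ ∈ SL(n,ℝ)` and `α_1,…,α_n` are
positive reals with product `1`, then there is a nonzero integer vector `x` with
`|∑ j, φ 0 j * x j| ≤ α 0` and `|∑ j, φ i j * x j| < α i` for all `i ≠ 0`. -/
theorem minkowski_linear_forms (n : ℕ) (hn : 2 ≤ n)
    (φ : Matrix (Fin n) (Fin n) ℝ) (hφ : φ.det = 1)
    (α : Fin n → ℝ) (hα : ∀ i, 0 < α i) (hprod : ∏ i, α i = 1) :
    ∃ x : Fin n → ℤ, x ≠ 0 ∧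
      |∑ j, φ ⟨0, by omega⟩ j * (x j : ℝ)| ≤ α ⟨0, by omega⟩ ∧
      ∀ i : Fin n, i ≠ ⟨0, by omega⟩ → |∑ j, φ i j * (x j : ℝ)| < α i := by
  set i0 : Fin n := ⟨0, by omega⟩ with hi0
  -- the family of enlarged bounds
  set β : ℕ → Fin n → ℝ := fun k i => if i = i0 then α i0 + 1 / (k + 1) else α i with hβdef
  have hβpos : ∀ k i, 0 < β k i := by
    intro k i
    by_cases h : i = i0
    · rw [hβdef]; simp only [if_pos h]
      have h1 : (0:ℝ) < 1 / (k+1) := by positivity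
      linarith [hα i0]
    · rw [hβdef]; simp only [if_neg h]; exact hα i
  have hβprod : ∀ k, 1 < ∏ i, β k i := by
    intro k
    have hP : ∏ i, β k i = (α i0 + 1 / (k + 1)) * ∏ i ∈ Finset.univ.erase i0, α i := by
      rw [← Finset.mul_prod_erase Finset.univ (β k) (Finset.mem_univ i0)]
      have h1 : β k i0 = α i0 + 1 / (k + 1) := by rw [hβdef]; simp
      have h2 : ∏ i ∈ Finset.univ.erase i0, β k i = ∏ i ∈ Finset.univ.erase i0, α i :=
        Finset.prod_congr rfl fun i hi => by
          rw [hβdef]; simp only [if_neg (Finset.mem_erase.mp hi).1]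
      rw [h1, h2]
    have hA : α i0 * ∏ i ∈ Finset.univ.erase i0, α i = 1 := by
      rw [Finset.mul_prod_erase Finset.univ α (Finset.mem_univ i0), hprod]
    have hPpos : 0 < ∏ i ∈ Finset.univ.erase i0, α i :=
      Finset.prod_pos fun i _ => hα i
    have hε : (0:ℝ) < 1 / (k + 1) := by positivity
    rw [hP]
    nlinarith
  choose f hf0 hflt using fun k =>
    minkowski_linear_forms_strict n φ hφ (β k) (hβpos k) (hβprod k)
  -- the candidate set is finite
  set A : Set (Fin n → ℤ) := {x | ∀ i, |∑ j, φ i j * (x j : ℝ)| ≤ α i + 1} with hA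
  have hdet : IsUnit φ.det := hφ ▸ isUnit_one
  have hAfin : A.Finite := by
    set ψ := φ⁻¹ with hψ
    set C : ℝ := ∑ j, ∑ i, |ψ j i| * (α i + 1) with hC
    have hterm : ∀ j : Fin n, (0:ℝ) ≤ ∑ i, |ψ j i| * (α i + 1) := by
      intro j
      refine Finset.sum_nonneg fun i _ => ?_
      have := hα i
      positivity
    have hbound : ∀ x ∈ A, ∀ j, |(x j : ℝ)| ≤ C := by
      intro x hx j
      set y : Fin n → ℝ := fun i => ∑ j, φ i j * (x j : ℝ) with hy
      have hxy : (fun j => (x j : ℝ)) = ψ.mulVec y := by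
        have h1 : y = φ.mulVec (fun j => (x j : ℝ)) := by
          ext i
          simp [hy, Matrix.mulVec, dotProduct]
        rw [h1, Matrix.mulVec_mulVec, hψ, Matrix.nonsing_inv_mul φ hdet,
          Matrix.one_mulVec]
      have hxj : (x j : ℝ) = ∑ i, ψ j i * y i := by
        have := congrFun hxy j
        simpa [Matrix.mulVec, dotProduct] using this
      rw [hxj]
      calc |∑ i, ψ j i * y i| ≤ ∑ i, |ψ j i * y i| := Finset.abs_sum_le_sum_abs _ _
      _ ≤ ∑ i, |ψ j i| * (α i + 1) := by
          refine Finset.sum_le_sum fun i _ => ?_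
          rw [abs_mul]
          exact mul_le_mul_of_nonneg_left (hx i) (abs_nonneg _)
      _ ≤ C := by
          rw [hC]
          exact Finset.single_le_sum (fun j _ => hterm j) (Finset.mem_univ j)
    have hsub : A ⊆ Set.univ.pi fun _ : Fin n => (↑(Finset.Icc (⌈-C⌉) (⌊C⌋)) : Set ℤ) := by
      intro x hx
      rw [Set.mem_pi]
      intro j _
      simp only [Finset.coe_Icc, Set.mem_Icc]
      have h := hbound x hx j
      rw [abs_le] at h
      constructor
      · exact Int.ceil_le.mpr (by exact_mod_cast h.1)
      · exact Int.le_floor.mpr (by exact_mod_cast h.2)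
    exact Set.Finite.subset (Set.Finite.pi fun _ => Finset.finite_toSet _) hsub
  have hfA : ∀ k, f k ∈ A := by
    intro k i
    have h := hflt k i
    have hβle : β k i ≤ α i + 1 := by
      by_cases hi : i = i0
      · subst hi
        simp only [hβdef, if_pos rfl]
        have : 1 / ((k:ℝ) + 1) ≤ 1 := by
          rw [div_le_one (by positivity)]
          linarith [Nat.cast_nonneg (α := ℝ) k]
        linarith
      · simp only [hβdef, if_neg hi]
        linarith [hα i]
    exact le_of_lt (lt_of_lt_of_le h hβle)
  haveI : Finite A := hAfin
  obtain ⟨y, hy⟩ := Finite.exists_infinite_fiber (fun k => (⟨f k, hfA k⟩ : A))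
  set I : Set ℕ := (fun k => (⟨f k, hfA k⟩ : A)) ⁻¹' {y} with hI
  have hIinf : I.Infinite := Set.infinite_coe_iff.mp hy
  have hIval : ∀ k ∈ I, f k = (y : Fin n → ℤ) := by
    intro k hk
    have : (⟨f k, hfA k⟩ : A) = y := hk
    exact congrArg Subtype.val this
  obtain ⟨k0, hk0⟩ := hIinf.nonempty
  refine ⟨(y : Fin n → ℤ), ?_, ?_, ?_⟩
  · rw [← hIval k0 hk0]; exact hf0 k0
  · refine le_of_forall_pos_le_add fun δ hδ => ?_
    obtain ⟨N, hN⟩ := exists_nat_one_div_lt (K := ℝ) hδ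
    obtain ⟨k, hkI, hkN⟩ := hIinf.exists_gt N
    have h := hflt k i0
    rw [hIval k hkI] at h
    simp only [hβdef, if_pos rfl] at h
    have hk1 : 1 / ((k:ℝ) + 1) ≤ 1 / ((N:ℝ) + 1) := by
      apply div_le_div_of_nonneg_left (by norm_num) (by positivity)
      have : (N:ℝ) ≤ (k:ℝ) := by exact_mod_cast le_of_lt hkN
      linarith
    calc |∑ j, φ i0 j * ((y : Fin n → ℤ) j : ℝ)| ≤ α i0 + 1 / ((k:ℝ) + 1) := le_of_lt h
    _ ≤ α i0 + 1 / ((N:ℝ) + 1) := by linarith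
    _ ≤ α i0 + δ := by linarith
  · intro i hi
    have h := hflt k0 i
    rw [hIval k0 hk0] at h
    simpa [hβdef, if_neg hi] using h
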